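/- arXiv:2303.03570 — 2 statements merged into one kernel-verified Lean document; each statement's English description precedes it below -/
import Mathlib

section
/- Let 𝒲, 𝒱, 𝒵 be Banach spaces, 𝒪 ⊆ 𝒲 × 𝒱 open containing (w₀, v₀), and G : 𝒪 → 𝒵 a C¹ (or analytic) map with G(w₀,v₀) = 0, ker D_w G(w₀,v₀) = {0}, and codim rng D_w G(w₀,v₀) = n ≥ 1. Suppose φ : 𝒵 × 𝒲 × 𝒱 → ℝⁿ is C¹ with φ(G(w,v), w, v) = 0 and φ(0, w, v) = 0 for all (w,v) in a neighborhood of (w₀,v₀), and D_Z φ(0, w₀, v₀) is surjective. Then there exist neighborhoods 𝒱₀ ∋ v₀, 𝒲₀ ∋ w₀ and a C¹ map w̃ : 𝒱₀ → 𝒲 with G(w̃(v), v) = 0 for all v ∈ 𝒱₀; moreover any (w,v) ∈ 𝒲₀ × 𝒱₀ with G(w,v) = 0 satisfies w = w̃(v). -/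
open Filter ContinuousLinearMap Set Metric

set_option maxHeartbeats 1000000

/-- Implicit function theorem with identities: if the linearization `D_w G(w₀,v₀)` is
injective with range of codimension `n ≥ 1`, and this deficiency is explained by `n`
identities `φ(G(w,v),w,v) = 0`, `φ(0,w,v) = 0` with `D_Z φ(0,w₀,v₀)` surjective, then
the zero set of `G` near `(w₀,v₀)` is the graph of a `C¹` map `v ↦ w̃(v)`. -/
theorem implicit_function_theorem_with_identities
    {W V Z : Type*}
    [NormedAddCommGroup W] [NormedSpace ℝ W] [CompleteSpace W]
    [NormedAddCommGroup V] [NormedSpace ℝ V] [CompleteSpace V]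
    [NormedAddCommGroup Z] [NormedSpace ℝ Z] [CompleteSpace Z]
    (O : Set (W × V)) (hO : IsOpen O) (w0 : W) (v0 : V) (h0 : (w0, v0) ∈ O)
    (G : W × V → Z) (hG : ContDiffOn ℝ 1 G O)
    (hG0 : G (w0, v0) = 0)
    (hker : Function.Injective (fderiv ℝ (fun w => G (w, v0)) w0))
    (n : ℕ) (hn : 1 ≤ n)
    (hcodim : Module.finrank ℝ
      (Z ⧸ LinearMap.range ((fderiv ℝ (fun w => G (w, v0)) w0) : W →ₗ[ℝ] Z)) = n)
    (φ : Z × W × V → (Fin n → ℝ)) (hφ : ContDiff ℝ 1 φ)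
    (N : Set (W × V)) (hN : N ∈ nhds (w0, v0))
    (hid1 : ∀ p ∈ N, φ (G p, p.1, p.2) = 0)
    (hid2 : ∀ p ∈ N, φ (0, p.1, p.2) = 0)
    (hsurj : Function.Surjective (fderiv ℝ (fun z => φ (z, w0, v0)) 0)) :
    ∃ V0 ∈ nhds v0, ∃ W0 ∈ nhds w0, ∃ wt : V → W,
      ContDiffOn ℝ 1 wt V0 ∧
      (∀ v ∈ V0, (wt v, v) ∈ O ∧ G (wt v, v) = 0) ∧
      (∀ w ∈ W0, ∀ v ∈ V0, (w, v) ∈ O → G (w, v) = 0 → w = wt v) := by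
  have hOnhds : O ∈ nhds (w0, v0) := hO.mem_nhds h0
  have hGat : ContDiffAt ℝ 1 G (w0, v0) := hG.contDiffAt hOnhds
  have hGdiff : DifferentiableAt ℝ G (w0, v0) := hGat.differentiableAt one_ne_zero
  have hφdiff : Differentiable ℝ φ := hφ.differentiable one_ne_zero
  set Dg : W × V →L[ℝ] Z := fderiv ℝ G (w0, v0) with hDgdef
  set Dw : W →L[ℝ] Z := fderiv ℝ (fun w => G (w, v0)) w0 with hDwdef
  set Dφ : Z × W × V →L[ℝ] (Fin n → ℝ) := fderiv ℝ φ (0, w0, v0) with hDφdef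
  set A : Z →L[ℝ] (Fin n → ℝ) := fderiv ℝ (fun z => φ (z, w0, v0)) 0 with hAdef
  have hDwG : HasFDerivAt (fun w => G (w, v0)) (Dg.comp (inl ℝ W V)) w0 :=
    hGdiff.hasFDerivAt.comp w0 (hasFDerivAt_prodMk_left w0 v0)
  have hDw_eq : Dw = Dg.comp (inl ℝ W V) := by rw [hDwdef]; exact hDwG.fderiv
  have hφat0 : HasFDerivAt φ Dφ (0, w0, v0) := (hφdiff _).hasFDerivAt
  have hA_eq : A = Dφ.comp (inl ℝ Z (W × V)) := by
    rw [hAdef]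
    exact (hφat0.comp 0 (hasFDerivAt_prodMk_left (0 : Z) ((w0, v0) : W × V))).fderiv
  have hNO : N ∩ O ∈ nhds (w0, v0) := Filter.inter_mem hN hOnhds
  have h1ev : (fun p : W × V => φ (G p, p.1, p.2)) =ᶠ[nhds (w0, v0)] fun _ => 0 :=
    eventually_of_mem hN fun p hp => hid1 p hp
  have h2ev : (fun p : W × V => φ (0, p.1, p.2)) =ᶠ[nhds (w0, v0)] fun _ => 0 :=
    eventually_of_mem hN fun p hp => hid2 p hp
  have hφatG : HasFDerivAt φ Dφ (G (w0, v0), w0, v0) := by rw [hG0]; exact hφat0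
  have h1 : Dφ.comp (Dg.prod (ContinuousLinearMap.id ℝ (W × V))) = 0 := by
    have hi : HasFDerivAt (fun p : W × V => ((G p, p) : Z × (W × V)))
        (Dg.prod (ContinuousLinearMap.id ℝ (W × V))) (w0, v0) :=
      hGdiff.hasFDerivAt.prodMk (hasFDerivAt_id (w0, v0))
    have hcomp := HasFDerivAt.comp (g := φ)
      (f := fun p : W × V => ((G p, p) : Z × (W × V))) (w0, v0) hφatG hi
    have hzero : HasFDerivAt (fun p : W × V => φ (G p, p.1, p.2))
        (0 : W × V →L[ℝ] (Fin n → ℝ)) (w0, v0) :=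
      (hasFDerivAt_const (0 : Fin n → ℝ) ((w0, v0) : W × V)).congr_of_eventuallyEq h1ev
    exact hcomp.unique hzero
  have hD2 : HasFDerivAt (fun p : W × V => φ (0, p.1, p.2))
      (Dφ.comp (inr ℝ Z (W × V))) (w0, v0) :=
    hφat0.comp (w0, v0) (hasFDerivAt_prodMk_right (0 : Z) ((w0, v0) : W × V))
  have h2 : Dφ.comp (inr ℝ Z (W × V)) = 0 :=
    hD2.unique ((hasFDerivAt_const (0 : Fin n → ℝ) ((w0, v0) : W × V)).congr_of_eventuallyEq h2ev)
  have hADw : ∀ w : W, A (Dw w) = 0 := by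
    intro w
    have e1 := DFunLike.congr_fun h1 ((w, 0) : W × V)
    have e2 := DFunLike.congr_fun h2 ((w, 0) : W × V)
    simp only [ContinuousLinearMap.comp_apply, ContinuousLinearMap.prod_apply,
      ContinuousLinearMap.coe_id', id_eq, ContinuousLinearMap.zero_apply,
      ContinuousLinearMap.inr_apply] at e1 e2
    rw [hA_eq, hDw_eq]
    simp only [ContinuousLinearMap.comp_apply, ContinuousLinearMap.inl_apply]
    have hsub : ((Dg (w, (0 : V)), (0 : W × V)) : Z × (W × V))
        = ((Dg (w, (0 : V)), ((w, (0 : V)) : W × V)) : Z × (W × V))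
          - ((0 : Z), ((w, (0 : V)) : W × V)) := by
      simp [Prod.ext_iff]
    rw [hsub, map_sub, e1, e2, sub_zero]
  have hsurjA : Function.Surjective A := hsurj
  have hRK : LinearMap.range (Dw : W →ₗ[ℝ] Z) ≤ LinearMap.ker (A : Z →ₗ[ℝ] (Fin n → ℝ)) := by
    rintro z ⟨w, rfl⟩
    exact LinearMap.mem_ker.2 (hADw w)
  have hfinK : Module.finrank ℝ (Z ⧸ LinearMap.ker (A : Z →ₗ[ℝ] (Fin n → ℝ))) = n := by
    have e1 := (A : Z →ₗ[ℝ] (Fin n → ℝ)).quotKerEquivOfSurjective hsurjA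
    rw [e1.finrank_eq, Module.finrank_fin_fun]
  have hfdR : FiniteDimensional ℝ (Z ⧸ LinearMap.range (Dw : W →ₗ[ℝ] Z)) := by
    apply Module.finite_of_finrank_pos
    rw [hcodim]; omega
  have hfdK : FiniteDimensional ℝ (Z ⧸ LinearMap.ker (A : Z →ₗ[ℝ] (Fin n → ℝ))) := by
    apply Module.finite_of_finrank_pos
    rw [hfinK]; omega
  set π := Submodule.mapQ (LinearMap.range (Dw : W →ₗ[ℝ] Z))
    (LinearMap.ker (A : Z →ₗ[ℝ] (Fin n → ℝ))) LinearMap.id (fun x hx => hRK hx) with hπdef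
  have hπsurj : Function.Surjective π := by
    intro y
    obtain ⟨z, rfl⟩ := Submodule.Quotient.mk_surjective _ y
    exact ⟨Submodule.Quotient.mk z, by simp [hπdef, Submodule.mapQ_apply]⟩
  have hKR : LinearMap.ker (A : Z →ₗ[ℝ] (Fin n → ℝ)) ≤ LinearMap.range (Dw : W →ₗ[ℝ] Z) := by
    have hrange : LinearMap.range π = ⊤ := LinearMap.range_eq_top.2 hπsurj
    have hrn := LinearMap.finrank_range_add_finrank_ker π
    rw [hrange, finrank_top, hfinK, hcodim] at hrn
    have hker0 : Module.finrank ℝ (LinearMap.ker π) = 0 := by omega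
    have hkerbot : LinearMap.ker π = ⊥ := Submodule.finrank_eq_zero.1 hker0
    intro z hz
    have hπz : π (Submodule.Quotient.mk z) = 0 := by
      rw [hπdef, Submodule.mapQ_apply]
      simpa [Submodule.Quotient.mk_eq_zero] using hz
    have hmem : Submodule.Quotient.mk z ∈ LinearMap.ker π := LinearMap.mem_ker.2 hπz
    rw [hkerbot, Submodule.mem_bot] at hmem
    exact (Submodule.Quotient.mk_eq_zero _).1 hmem
  obtain ⟨Bl, hBl⟩ := (A : Z →ₗ[ℝ] (Fin n → ℝ)).exists_rightInverse_of_surjective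
    (LinearMap.range_eq_top.2 hsurjA)
  set B : (Fin n → ℝ) →L[ℝ] Z := LinearMap.toContinuousLinearMap Bl with hBdef
  have hABc : ∀ c, A (B c) = c := by
    intro c
    have h := DFunLike.congr_fun hBl c
    simpa [hBdef] using h
  set P1 : ((Fin n → ℝ) × W) × V →L[ℝ] (Fin n → ℝ) :=
    (fst ℝ (Fin n → ℝ) W).comp (fst ℝ ((Fin n → ℝ) × W) V) with hP1
  set Pw : ((Fin n → ℝ) × W) × V →L[ℝ] W :=
    (snd ℝ (Fin n → ℝ) W).comp (fst ℝ ((Fin n → ℝ) × W) V) with hPw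
  set Pv : ((Fin n → ℝ) × W) × V →L[ℝ] V := snd ℝ ((Fin n → ℝ) × W) V with hPv
  set L : ((Fin n → ℝ) × W) × V →L[ℝ] Z × V :=
    ((Dg.comp (Pw.prod Pv)) - (B.comp P1)).prod Pv with hLdef
  have hLapp : ∀ (c : Fin n → ℝ) (w : W) (v : V),
      L ((c, w), v) = (Dg (w, v) - B c, v) := by
    intro c w v
    simp [hLdef, hPw, hPv, hP1, ContinuousLinearMap.sub_apply,
      ContinuousLinearMap.prod_apply, ContinuousLinearMap.comp_apply]
  have hLinj : L.ker = ⊥ := by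
    rw [LinearMap.ker_eq_bot']
    rintro ⟨⟨c, w⟩, v⟩ hx
    rw [ContinuousLinearMap.coe_coe, hLapp] at hx
    have hv : v = 0 := congrArg Prod.snd hx
    have h1x : Dg (w, v) - B c = 0 := congrArg Prod.fst hx
    subst hv
    have hDgw : Dg (w, (0 : V)) = B c := by rwa [sub_eq_zero] at h1x
    have hc0 : c = 0 := by
      have h := hADw w
      rw [hDw_eq] at h
      simp only [ContinuousLinearMap.comp_apply, ContinuousLinearMap.inl_apply] at h
      rw [hDgw, hABc c] at h
      exact h
    subst hc0
    have hB0 : B (0 : Fin n → ℝ) = 0 := map_zero B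
    have hDw0 : Dw w = 0 := by
      rw [hDw_eq]
      simp only [ContinuousLinearMap.comp_apply, ContinuousLinearMap.inl_apply]
      rw [hDgw, hB0]
    have hw0 : w = 0 := hker (by rw [hDw0, map_zero])
    subst hw0
    rfl
  have hLsurj : L.range = ⊤ := by
    rw [LinearMap.range_eq_top]
    rintro ⟨z, v⟩
    set z' : Z := z - Dg (0, v) with hz'
    have hk : z' - B (A z') ∈ LinearMap.ker (A : Z →ₗ[ℝ] (Fin n → ℝ)) := by
      have : A (z' - B (A z')) = 0 := by rw [map_sub, hABc, sub_self]
      exact LinearMap.mem_ker.2 this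
    obtain ⟨w, hw⟩ := hKR hk
    refine ⟨((-(A z'), w), v), ?_⟩
    rw [ContinuousLinearMap.coe_coe, hLapp]
    rw [Prod.mk.injEq]
    refine ⟨?_, rfl⟩
    have hDww : Dg (w, (0 : V)) = z' - B (A z') := by
      have h : Dw w = z' - B (A z') := hw
      rw [hDw_eq] at h
      simpa only [ContinuousLinearMap.comp_apply, ContinuousLinearMap.inl_apply] using h
    have hsplit : ((w, v) : W × V) = ((w, (0 : V)) : W × V) + (((0 : W), v) : W × V) := by
      simp [Prod.ext_iff]
    rw [hsplit, map_add, hDww, map_neg, sub_neg_eq_add, hz']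
    abel
  set L' := ContinuousLinearEquiv.ofBijective L hLinj hLsurj with hL'def
  have hcoeL : (L' : ((Fin n → ℝ) × W) × V →L[ℝ] Z × V) = L :=
    ContinuousLinearEquiv.coe_ofBijective L hLinj hLsurj
  set Fm : ((Fin n → ℝ) × W) × V → Z × V :=
    fun x => (G (x.1.2, x.2) - B x.1.1, x.2) with hFmdef
  set x0 : ((Fin n → ℝ) × W) × V := ((0, w0), v0) with hx0def
  have hFmc : ContDiffAt ℝ 1 Fm x0 := by
    have hinner : ContDiffAt ℝ 1
        (fun x : ((Fin n → ℝ) × W) × V => ((x.1.2, x.2) : W × V)) x0 :=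
      ((Pw.prod Pv).contDiff).contDiffAt
    have h1c : ContDiffAt ℝ 1 (fun x : ((Fin n → ℝ) × W) × V => G (x.1.2, x.2)) x0 :=
      hGat.comp x0 hinner
    have h2c : ContDiffAt ℝ 1 (fun x : ((Fin n → ℝ) × W) × V => B x.1.1) x0 :=
      ((B.comp P1).contDiff).contDiffAt
    exact (h1c.sub h2c).prodMk contDiff_snd.contDiffAt
  have hGproj : HasFDerivAt (fun x : ((Fin n → ℝ) × W) × V => G (x.1.2, x.2))
      (Dg.comp (Pw.prod Pv)) x0 :=
    hGdiff.hasFDerivAt.comp x0 ((Pw.prod Pv).hasFDerivAt)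
  have hFm' : HasFDerivAt Fm (L' : ((Fin n → ℝ) × W) × V →L[ℝ] Z × V) x0 := by
    rw [hcoeL]
    exact (hGproj.sub ((B.comp P1).hasFDerivAt)).prodMk (Pv.hasFDerivAt)
  have hstrict : HasStrictFDerivAt Fm (L' : ((Fin n → ℝ) × W) × V →L[ℝ] Z × V) x0 :=
    hFmc.hasStrictFDerivAt' hFm' one_ne_zero
  set gloc : Z × V → ((Fin n → ℝ) × W) × V := hstrict.localInverse Fm L' x0 with hglocdef
  have hFmx0 : Fm x0 = ((0 : Z), v0) := by
    show (G (w0, v0) - B 0, v0) = ((0 : Z), v0)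
    rw [hG0, map_zero, sub_zero]
  have hgC : ContDiffAt ℝ 1 gloc ((0 : Z), v0) := by
    have h := hFmc.to_localInverse (f' := L') (hf' := hFm') (hn := one_ne_zero)
    rw [hFmx0] at h
    exact h
  have hgx0 : gloc ((0 : Z), v0) = x0 := by
    have h := hstrict.localInverse_apply_image
    rwa [hFmx0] at h
  have hleft : ∀ᶠ x in nhds x0, gloc (Fm x) = x := hstrict.eventually_left_inverse
  have hright0 : ∀ᶠ y in nhds (Fm x0), Fm (gloc y) = y := hstrict.eventually_right_inverse
  rw [hFmx0] at hright0
  -- quantitative injectivity via the identities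
  set J : (Fin n → ℝ) × (W × V) → ((Fin n → ℝ) →L[ℝ] (Fin n → ℝ)) :=
    fun q => (fderiv ℝ φ (B q.1, q.2.1, q.2.2)).comp
      (B.prod (0 : (Fin n → ℝ) →L[ℝ] W × V)) with hJdef
  have hJcont : Continuous J := by
    apply Continuous.clm_comp
    · exact (hφ.continuous_fderiv one_ne_zero).comp
        ((B.continuous.comp continuous_fst).prodMk continuous_snd)
    · exact continuous_const
  have hJ0 : J (0, (w0, v0)) = ContinuousLinearMap.id ℝ (Fin n → ℝ) := by
    refine ContinuousLinearMap.ext fun c => ?_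
    have h := hABc c
    rw [hA_eq] at h
    simp only [ContinuousLinearMap.comp_apply, ContinuousLinearMap.inl_apply] at h
    simp only [hJdef, ContinuousLinearMap.comp_apply, ContinuousLinearMap.prod_apply,
      ContinuousLinearMap.zero_apply, ContinuousLinearMap.coe_id', id_eq, map_zero]
    rw [← hDφdef]
    exact h
  have hSopen : IsOpen {q : (Fin n → ℝ) × (W × V) |
      ‖J q - ContinuousLinearMap.id ℝ (Fin n → ℝ)‖ < 1 / 2} :=
    isOpen_lt (hJcont.sub continuous_const).norm continuous_const
  have hq0S : ((0, (w0, v0)) : (Fin n → ℝ) × (W × V)) ∈ {q : (Fin n → ℝ) × (W × V) |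
      ‖J q - ContinuousLinearMap.id ℝ (Fin n → ℝ)‖ < 1 / 2} := by
    simp [hJ0]
  obtain ⟨ε, hε, hballS⟩ := Metric.isOpen_iff.1 hSopen _ hq0S
  have key : ∀ (c : Fin n → ℝ) (p : W × V), ‖c‖ < ε → p ∈ Metric.ball ((w0, v0) : W × V) ε →
      φ (B c, p.1, p.2) = 0 → φ (0, p.1, p.2) = 0 → c = 0 := by
    intro c p hc hp hφ1 hφ2
    set f : (Fin n → ℝ) → Fin n → ℝ := fun c' => φ (B c', p.1, p.2) - c' with hfdef
    have hderiv : ∀ c' ∈ Metric.ball (0 : Fin n → ℝ) ε,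
        HasFDerivWithinAt f (J (c', p) - ContinuousLinearMap.id ℝ (Fin n → ℝ))
          (Metric.ball (0 : Fin n → ℝ) ε) c' := by
      intro c' _
      have hin : HasFDerivAt (fun c' : Fin n → ℝ => ((B c', p) : Z × (W × V)))
          (B.prod (0 : (Fin n → ℝ) →L[ℝ] W × V)) c' :=
        B.hasFDerivAt.prodMk (hasFDerivAt_const p c')
      have hout : HasFDerivAt φ (fderiv ℝ φ (B c', p.1, p.2)) (B c', p.1, p.2) :=
        (hφdiff _).hasFDerivAt
      exact ((hout.comp c' hin).sub (hasFDerivAt_id c')).hasFDerivWithinAt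
    have hbound : ∀ c' ∈ Metric.ball (0 : Fin n → ℝ) ε,
        ‖J (c', p) - ContinuousLinearMap.id ℝ (Fin n → ℝ)‖ ≤ 1 / 2 := by
      intro c' hc'
      have hmem : ((c', p) : (Fin n → ℝ) × (W × V)) ∈
          Metric.ball (((0 : Fin n → ℝ), ((w0, v0) : W × V))) ε := by
        rw [← ball_prod_same]
        exact ⟨hc', hp⟩
      exact le_of_lt (hballS hmem)
    have hmv := (convex_ball (0 : Fin n → ℝ) ε).norm_image_sub_le_of_norm_hasFDerivWithin_le
      hderiv hbound (Metric.mem_ball_self hε) (mem_ball_zero_iff.2 hc)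
    have hf0 : f 0 = 0 := by
      rw [hfdef]
      simp only [map_zero, sub_zero]
      exact hφ2
    have hfc : f c = -c := by
      rw [hfdef]
      simp only [hφ1, zero_sub]
    rw [hfc, hf0, sub_zero, sub_zero, norm_neg] at hmv
    have h0 : ‖c‖ ≤ 0 := by linarith
    exact norm_le_zero_iff.1 h0
  -- the implicit function
  set wt : V → W := fun v => (gloc ((0 : Z), v)).1.2 with hwtdef
  have hwtC : ContDiffAt ℝ 1 wt v0 := by
    have hinner : ContDiffAt ℝ 1 (fun v : V => (((0 : Z), v) : Z × V)) v0 :=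
      (contDiff_const.prodMk contDiff_id).contDiffAt
    have hcomp : ContDiffAt ℝ 1 (fun v : V => gloc ((0 : Z), v)) v0 := hgC.comp v0 hinner
    exact (contDiff_snd.comp contDiff_fst).contDiffAt.comp v0 hcomp
  obtain ⟨U1, hU1, hwtOn⟩ := hwtC.contDiffOn le_rfl (by simp)
  have hmc : ContinuousAt (fun v : V => gloc ((0 : Z), v)) v0 :=
    hgC.continuousAt.comp ((continuous_const.prodMk continuous_id).continuousAt)
  have hintNO : interior (N ∩ O) ∈ nhds (w0, v0) := interior_mem_nhds.2 hNO
  set Ω : Set (((Fin n → ℝ) × W) × V) :=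
    {x | ‖x.1.1‖ < ε} ∩ {x | (x.1.2, x.2) ∈ interior (N ∩ O)} ∩
      {x | ((x.1.2, x.2) : W × V) ∈ Metric.ball ((w0, v0) : W × V) ε} with hΩdef
  have cont2 : Continuous fun x : ((Fin n → ℝ) × W) × V => ((x.1.2, x.2) : W × V) :=
    (continuous_snd.comp continuous_fst).prodMk continuous_snd
  have hΩopen : IsOpen Ω := by
    refine IsOpen.inter (IsOpen.inter ?_ ?_) ?_
    · exact isOpen_lt ((continuous_fst.comp continuous_fst).norm) continuous_const
    · exact isOpen_interior.preimage cont2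
    · exact Metric.isOpen_ball.preimage cont2
  have hx0Ω : x0 ∈ Ω := by
    refine ⟨⟨?_, ?_⟩, ?_⟩
    · show ‖(0 : Fin n → ℝ)‖ < ε
      simpa using hε
    · exact mem_interior_iff_mem_nhds.2 hNO
    · exact Metric.mem_ball_self hε
  have hmΩ : ∀ᶠ v in nhds v0, gloc ((0 : Z), v) ∈ Ω := by
    apply hmc.eventually_mem
    rw [hgx0]
    exact hΩopen.mem_nhds hx0Ω
  have hFg : ∀ᶠ v in nhds v0, Fm (gloc ((0 : Z), v)) = ((0 : Z), v) := by
    have ht : Filter.Tendsto (fun v : V => (((0 : Z), v) : Z × V)) (nhds v0)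
        (nhds (((0 : Z), v0) : Z × V)) :=
      (continuous_const.prodMk continuous_id).continuousAt
    exact ht.eventually hright0
  obtain ⟨V1, hV1, hV1sub⟩ := (hFg.and hmΩ).exists_mem
  obtain ⟨T, hT, hTsub⟩ := hleft.exists_mem
  rw [hx0def, nhds_prod_eq] at hT
  obtain ⟨T1, hT1, T2, hT2, hTsub2⟩ := Filter.mem_prod_iff.1 hT
  rw [nhds_prod_eq] at hT1
  obtain ⟨Tc, hTc, W0, hW0, hTsub1⟩ := Filter.mem_prod_iff.1 hT1
  refine ⟨V1 ∩ T2 ∩ U1, Filter.inter_mem (Filter.inter_mem hV1 hT2) hU1, W0, hW0, wt,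
    hwtOn.mono (fun v hv => hv.2), ?_, ?_⟩
  · intro v hv
    obtain ⟨⟨hvV1, hvT2⟩, hvU1⟩ := hv
    obtain ⟨hFgv, hΩv⟩ := hV1sub v hvV1
    have hx2 : (gloc ((0 : Z), v)).2 = v := congrArg Prod.snd hFgv
    have hxG : G ((gloc ((0 : Z), v)).1.2, (gloc ((0 : Z), v)).2)
        - B (gloc ((0 : Z), v)).1.1 = 0 := congrArg Prod.fst hFgv
    have hmemNO : (((gloc ((0 : Z), v)).1.2, (gloc ((0 : Z), v)).2) : W × V) ∈ N ∩ O :=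
      interior_subset hΩv.1.2
    have hm3 : (((gloc ((0 : Z), v)).1.2, (gloc ((0 : Z), v)).2) : W × V) ∈
        Metric.ball ((w0, v0) : W × V) ε := hΩv.2
    rw [hx2] at hxG hmemNO hm3
    have hGx : G ((gloc ((0 : Z), v)).1.2, v) = B (gloc ((0 : Z), v)).1.1 := by
      rwa [sub_eq_zero] at hxG
    have hball' : (((gloc ((0 : Z), v)).1.2, v) : W × V) ∈
        Metric.ball ((w0, v0) : W × V) ε := hm3
    have hNmem : (((gloc ((0 : Z), v)).1.2, v) : W × V) ∈ N := hmemNO.1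
    have hOmem : (((gloc ((0 : Z), v)).1.2, v) : W × V) ∈ O := hmemNO.2
    have hc0 : (gloc ((0 : Z), v)).1.1 = 0 := by
      apply key _ (((gloc ((0 : Z), v)).1.2, v) : W × V) hΩv.1.1 hball'
      · rw [← hGx]
        exact hid1 _ hNmem
      · exact hid2 _ hNmem
    constructor
    · exact hOmem
    · show G ((gloc ((0 : Z), v)).1.2, v) = 0
      rw [hGx, hc0, map_zero]
  · intro w hw v hv _ hGwv
    obtain ⟨⟨hvV1, hvT2⟩, hvU1⟩ := hv
    have h01 : (((0 : Fin n → ℝ), w) : (Fin n → ℝ) × W) ∈ T1 :=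
      hTsub1 (Set.mem_prod.2 ⟨mem_of_mem_nhds hTc, hw⟩)
    have hmemT : ((((0 : Fin n → ℝ), w), v) : ((Fin n → ℝ) × W) × V) ∈ T :=
      hTsub2 (Set.mem_prod.2 ⟨h01, hvT2⟩)
    have hginv := hTsub _ hmemT
    have hFmw : Fm (((0 : Fin n → ℝ), w), v) = ((0 : Z), v) := by
      show (G (w, v) - B 0, v) = ((0 : Z), v)
      rw [hGwv, map_zero, sub_zero]
    rw [hFmw] at hginv
    have : wt v = w := by
      show (gloc ((0 : Z), v)).1.2 = w
      rw [hginv]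
    exact this.symm
end

section
/- Consider the linear map from ℝ × ℂ to ℂ² (viewed as real vector spaces of dimensions 3 and 4) given by the Jacobian D_λ V(Λ₀) of the translating-pair point vortex map at γ₁ = 1, γ₂ = −1, ζ₁ = i, ζ₂ = −i, c = 1/(4π), Ω = 0, with respect to λ = (γ₁, ζ₂). Explicitly, in real coordinates this map is (−1/(8π)) times the matrix with rows (0,0,1), (0,1,0), (2,0,1), (0,1,0). This map has rank 3, i.e. its range has real codimension 1 in ℝ⁴. -/
/-- The Jacobian `D_λ V(Λ₀)` of the translating-pair point vortex map at
`γ₁ = 1, γ₂ = −1, ζ₁ = i, ζ₂ = −i, c = 1/(4π), Ω = 0` with respect to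
`λ = (γ₁, ζ₂)`, written in real coordinates as `(−1/(8π))` times the matrix with
rows `(0,0,1), (0,1,0), (2,0,1), (0,1,0)`, has rank 3; equivalently its range has
real codimension 1 in `ℝ⁴`. -/
theorem translating_pair_jacobian_rank :
    let A : Matrix (Fin 4) (Fin 3) ℝ :=
      (-1 / (8 * Real.pi)) • !![0, 0, 1; 0, 1, 0; 2, 0, 1; 0, 1, 0]
    A.rank = 3 ∧
      Module.finrank ℝ ((Fin 4 → ℝ) ⧸ LinearMap.range A.mulVecLin) = 1 := by
  intro A
  have hc : (-1 / (8 * Real.pi)) ≠ 0 := by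
    have := Real.pi_ne_zero
    intro h
    field_simp at h
    norm_num at h
  have hinj : Function.Injective A.mulVecLin := by
    rw [← LinearMap.ker_eq_bot, LinearMap.ker_eq_bot']
    intro v hv
    simp only [Matrix.mulVecLin_apply, A, Matrix.smul_mulVec] at hv
    have hv' : (!![0, 0, 1; 0, 1, 0; 2, 0, 1; 0, 1, 0] : Matrix (Fin 4) (Fin 3) ℝ).mulVec v = 0 :=
      (smul_eq_zero.mp hv).resolve_left hc
    have h0 := congrFun hv' 0
    have h1 := congrFun hv' 1
    have h2 := congrFun hv' 2
    simp [Matrix.mulVec, dotProduct, Fin.sum_univ_succ] at h0 h1 h2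
    funext i
    fin_cases i <;> simp <;> linarith
  have hrank : A.rank = 3 := by
    rw [Matrix.rank, LinearMap.finrank_range_of_inj hinj]
    simp
  refine ⟨hrank, ?_⟩
  have hq := Submodule.finrank_quotient_add_finrank (LinearMap.range A.mulVecLin)
  have h4 : Module.finrank ℝ (Fin 4 → ℝ) = 4 := by simp
  rw [h4] at hq
  have : Module.finrank ℝ ↥(LinearMap.range A.mulVecLin) = 3 := hrank
  omega
end
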